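/- The generating function of the leading-elements statistic satisfies: sum over π ∈ PF(m,n) of y^{lel(π)} = (n-m+1) y (y + n)^{m-1}. -/

import Mathlib

open Finset

/-- The finite set of parking functions `PF(m,n)`, encoded as functions
`Fin m → Fin n`, where the preferred spot of car `k` is `(π k : ℕ) + 1 ∈ {1,…,n}`. -/
def pf (m n : ℕ) : Finset (Fin m → Fin n) :=
  Finset.univ.filter (fun π =>
    ∀ i, i ≤ n → m + i ≤ (Finset.univ.filter (fun k => (π k : ℕ) + 1 ≤ i)).card + n)

/-- Partial sums of the periodic step sequence `a (j % N) - 1`. -/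
def Qf (a : ℕ → ℕ) (N : ℕ) (t : ℕ) : ℤ :=
  (∑ j ∈ Finset.range t, (a (j % N) : ℤ)) - t

lemma Qf_zero (a : ℕ → ℕ) (N : ℕ) : Qf a N 0 = 0 := by simp [Qf]

lemma Qf_succ (a : ℕ → ℕ) (N t : ℕ) : Qf a N (t + 1) = Qf a N t + a (t % N) - 1 := by
  simp [Qf, Finset.sum_range_succ]; ring

lemma Qf_succ_ge (a : ℕ → ℕ) (N t : ℕ) : Qf a N t - 1 ≤ Qf a N (t + 1) := by
  rw [Qf_succ]; have : (0:ℤ) ≤ a (t % N) := Int.natCast_nonneg _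
  omega

lemma Qf_period {a : ℕ → ℕ} {N m : ℕ} (hsum : ∑ v ∈ Finset.range N, a v = m) :
    ∀ t, Qf a N (t + N) = Qf a N t + m - N := by
  intro t
  induction t with
  | zero =>
    simp only [Nat.zero_add, Qf_zero, Qf]
    have : ∑ j ∈ Finset.range N, (a (j % N) : ℤ) = (m : ℤ) := by
      rw [← hsum]; push_cast
      exact Finset.sum_congr rfl (fun j hj => by
        rw [Nat.mod_eq_of_lt (Finset.mem_range.mp hj)])
    rw [this]; ring
  | succ t ih =>
    have h1 : t + 1 + N = (t + N) + 1 := by ring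
    rw [h1, Qf_succ, ih, Qf_succ, Nat.add_mod_right]
    ring

/-- `u` is a strict new minimum of the path. -/
def IsNewMin (a : ℕ → ℕ) (N u : ℕ) : Prop := ∀ t < u, Qf a N u < Qf a N t

instance (a : ℕ → ℕ) (N u : ℕ) : Decidable (IsNewMin a N u) :=
  Nat.decidableBallLT _ _

/-- Extension lemma: for `u ∈ [N, 2N)`, it suffices to check the last `N` points. -/
lemma isNewMin_of_window {a : ℕ → ℕ} {N m : ℕ} (hsum : ∑ v ∈ Finset.range N, a v = m)
    (hm : m < N) {u : ℕ} (hu : N ≤ u) (hu2 : u < 2 * N)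
    (H : ∀ t, u - N ≤ t → t < u → Qf a N u < Qf a N t) : IsNewMin a N u := by
  have key : ∀ d, ∀ t, t + d = u → 0 < d → Qf a N u < Qf a N t := by
    intro d
    induction d using Nat.strong_induction_on with
    | _ d ih =>
      intro t htd hd
      by_cases hle : d ≤ N
      · exact H t (by omega) (by omega)
      · have h1 : Qf a N u < Qf a N (t + N) := ih (d - N) (by omega) (t + N) (by omega) (by omega)
        have h2 : Qf a N (t + N) = Qf a N t + m - N := Qf_period hsum t
        omega
  intro t ht
  exact key (u - t) t (by omega) (by omega)

/-- Running minimum of the path over `[0, t]`. -/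
def Mf (a : ℕ → ℕ) (N t : ℕ) : ℤ :=
  (Finset.range (t + 1)).inf' ⟨0, by simp⟩ (Qf a N)

lemma Mf_le {a : ℕ → ℕ} {N : ℕ} {t t' : ℕ} (h : t' ≤ t) : Mf a N t ≤ Qf a N t' :=
  Finset.inf'_le _ (Finset.mem_range.mpr (by omega))

lemma Mf_exists (a : ℕ → ℕ) (N t : ℕ) : ∃ t' ≤ t, Mf a N t = Qf a N t' := by
  obtain ⟨i, hi, h⟩ := Finset.exists_mem_eq_inf' (⟨0, by simp⟩ : (Finset.range (t+1)).Nonempty) (Qf a N)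
  exact ⟨i, by simpa using Nat.lt_succ_iff.mp (Finset.mem_range.mp hi), h⟩

lemma Mf_succ (a : ℕ → ℕ) (N t : ℕ) : Mf a N (t + 1) = min (Qf a N (t + 1)) (Mf a N t) := by
  apply le_antisymm
  · apply le_min (Mf_le (le_refl _))
    obtain ⟨t', ht', he⟩ := Mf_exists a N t
    rw [he]; exact Mf_le (by omega)
  · obtain ⟨t'', ht'', he⟩ := Mf_exists a N (t + 1)
    rw [he]
    rcases Nat.lt_succ_iff_lt_or_eq.mp (Nat.lt_succ_of_le ht'') with h | h
    · exact le_trans (min_le_right _ _) (Mf_le (by omega))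
    · rw [h]; exact min_le_left _ _

lemma newMin_succ_iff (a : ℕ → ℕ) (N t : ℕ) :
    IsNewMin a N (t + 1) ↔ Qf a N (t + 1) < Mf a N t := by
  rw [show Mf a N t = (Finset.range (t + 1)).inf' (Finset.nonempty_range_iff.mpr (Nat.succ_ne_zero t)) (Qf a N) from rfl,
    Finset.lt_inf'_iff]
  constructor
  · intro h i hi; exact h i (Finset.mem_range.mp hi)
  · intro h i hi; exact h i (Finset.mem_range.mpr hi)

lemma Mf_succ_eq (a : ℕ → ℕ) (N t : ℕ) :
    Mf a N (t + 1) = if IsNewMin a N (t + 1) then Mf a N t - 1 else Mf a N t := by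
  rw [Mf_succ]
  by_cases h : IsNewMin a N (t + 1)
  · rw [if_pos h]
    have h1 := (newMin_succ_iff a N t).mp h
    obtain ⟨t', ht', he⟩ := Mf_exists a N t
    have h2 : Qf a N t' - 1 ≤ Qf a N (t + 1) := by
      have := Qf_succ_ge a N t
      have := Mf_le (le_refl t) (a := a) (N := N)
      omega
    omega
  · rw [if_neg h]
    have h1 := (newMin_succ_iff a N t).not.mp h
    omega

/-- Telescoping: count of new minima in `(s, e]`. -/
lemma count_newmin_Ico (a : ℕ → ℕ) (N : ℕ) :
    ∀ s e, s ≤ e →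
      ((Finset.Ico (s + 1) (e + 1)).filter (IsNewMin a N)).card = (Mf a N s - Mf a N e).toNat := by
  intro s e h
  induction e, h using Nat.le_induction with
  | base => simp
  | succ e he ih =>
    have hins : Finset.Ico (s + 1) (e + 1 + 1) = insert (e + 1) (Finset.Ico (s + 1) (e + 1)) := by
      rw [Finset.Ico_insert_right (by omega)]
      congr 1
    rw [hins, Finset.filter_insert]
    have hanti : Mf a N e ≤ Mf a N s := by
      obtain ⟨t', ht', he'⟩ := Mf_exists a N s
      rw [he']; exact Mf_le (by omega)
    by_cases hnm : IsNewMin a N (e + 1)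
    · rw [if_pos hnm, Finset.card_insert_of_notMem (by simp), ih,
        Mf_succ_eq, if_pos hnm]
      omega
    · rw [if_neg hnm, ih, Mf_succ_eq, if_neg hnm]

lemma Mf_shift {a : ℕ → ℕ} {N m : ℕ} (hsum : ∑ v ∈ Finset.range N, a v = m)
    (hm : m < N) (hN : 1 ≤ N) :
    Mf a N (2 * N - 1) = Mf a N (N - 1) + m - N := by
  apply le_antisymm
  · obtain ⟨t', ht', he⟩ := Mf_exists a N (N - 1)
    have h1 : Mf a N (2 * N - 1) ≤ Qf a N (t' + N) := Mf_le (by omega)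
    rw [Qf_period hsum t'] at h1
    omega
  · obtain ⟨t'', ht'', he⟩ := Mf_exists a N (2 * N - 1)
    rw [he]
    by_cases h : t'' < N
    · have : Mf a N (N - 1) ≤ Qf a N t'' := Mf_le (by omega)
      omega
    · have h2 : Qf a N t'' = Qf a N (t'' - N) + m - N := by
        have := Qf_period hsum (t'' - N)
        rw [show t'' - N + N = t'' by omega] at this
        exact this
      have h3 : Mf a N (N - 1) ≤ Qf a N (t'' - N) := Mf_le (by omega)
      omega

/-- The cycle lemma: exactly `N - m` new minima in `[N, 2N)`. -/
lemma cycle_count {a : ℕ → ℕ} {N m : ℕ} (hsum : ∑ v ∈ Finset.range N, a v = m)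
    (hm : m < N) (hN : 1 ≤ N) :
    ((Finset.Ico N (2 * N)).filter (IsNewMin a N)).card = N - m := by
  have h1 := count_newmin_Ico a N (N - 1) (2 * N - 1) (by omega)
  rw [show N - 1 + 1 = N by omega, show 2 * N - 1 + 1 = 2 * N by omega] at h1
  rw [h1, Mf_shift hsum hm hN]
  omega

section Shift

variable {m n : ℕ}

/-- Value-counting function of `h`. -/
def cnt (h : Fin m → ZMod (n + 1)) (v : ℕ) : ℕ :=
  (Finset.univ.filter (fun k => (h k).val = v)).card

lemma cnt_sum (hmn : m ≤ n) (h : Fin m → ZMod (n + 1)) :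
    ∑ v ∈ Finset.range (n + 1), cnt h v = m := by
  have := Finset.card_eq_sum_card_fiberwise
    (f := fun k => (h k).val) (s := Finset.univ) (t := Finset.range (n + 1))
    (fun x _ => Finset.mem_range.mpr (ZMod.val_lt (h x)))
  simpa [cnt] using this.symm

lemma sum_shift (a : ℕ → ℕ) (N b i : ℕ) :
    (∑ v ∈ Finset.range i, (a ((b + v) % N) : ℤ)) = Qf a N (b + i) - Qf a N b + i := by
  induction i with
  | zero => simp
  | succ i ih =>
    rw [Finset.sum_range_succ, ih, show b + (i + 1) = (b + i) + 1 by ring, Qf_succ]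
    push_cast
    ring

lemma card_val_lt (hmn : m ≤ n) (h : Fin m → ZMod (n + 1)) (c : ZMod (n + 1)) {i : ℕ}
    (hi : i ≤ n) :
    (Finset.univ.filter (fun k => (h k + c).val < i)).card
      = ∑ v ∈ Finset.range i, cnt h ((v + (-c).val) % (n + 1)) := by
  have hfib := Finset.card_eq_sum_card_fiberwise
    (f := fun k => (h k + c).val) (s := Finset.univ.filter (fun k => (h k + c).val < i))
    (t := Finset.range i)
    (fun x hx => Finset.mem_range.mpr (Finset.mem_filter.mp hx).2)
  rw [hfib]
  apply Finset.sum_congr rfl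
  intro v hv
  have hvi : v < i := Finset.mem_range.mp hv
  have hvN : v < n + 1 := by omega
  rw [Finset.filter_filter]
  have hpred : ∀ k : Fin m, ((h k + c).val < i ∧ (h k + c).val = v)
      ↔ (h k).val = (v + (-c).val) % (n + 1) := by
    intro k
    constructor
    · rintro ⟨-, hval⟩
      have : h k + c = (v : ZMod (n + 1)) := by
        apply ZMod.val_injective
        rw [hval, ZMod.val_cast_of_lt hvN]
      have hk : h k = (v : ZMod (n + 1)) + (-c) := by
        rw [← this]; ring
      rw [hk, ZMod.val_add, ZMod.val_cast_of_lt hvN]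
    · intro hval
      have hk : h k = (v : ZMod (n + 1)) + (-c) := by
        apply ZMod.val_injective
        rw [hval, ZMod.val_add, ZMod.val_cast_of_lt hvN]
      have : h k + c = (v : ZMod (n + 1)) := by rw [hk]; ring
      rw [this, ZMod.val_cast_of_lt hvN]
      exact ⟨hvi, rfl⟩
  rw [cnt]
  congr 1
  apply Finset.filter_congr
  intro k _
  exact hpred k

lemma good_shift_iff (hm : 1 ≤ m) (hmn : m ≤ n) (h : Fin m → ZMod (n + 1))
    (c : ZMod (n + 1)) :
    (∀ i, i ≤ n → m + i ≤ (Finset.univ.filter (fun k => (h k + c).val < i)).card + n)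
      ↔ IsNewMin (cnt h) (n + 1) ((-c).val + (n + 1)) := by
  have hbN : (-c).val < n + 1 := ZMod.val_lt _
  have hsum : ∑ v ∈ Finset.range (n + 1), cnt h v = m := cnt_sum hmn h
  have hper : Qf (cnt h) (n + 1) ((-c).val + (n + 1))
      = Qf (cnt h) (n + 1) ((-c).val) + m - (n + 1) := Qf_period hsum _
  have key : ∀ i, i ≤ n →
      ((m + i ≤ (Finset.univ.filter (fun k => (h k + c).val < i)).card + n)
        ↔ Qf (cnt h) (n + 1) ((-c).val + (n + 1)) < Qf (cnt h) (n + 1) ((-c).val + i)) := by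
    intro i hi
    rw [card_val_lt hmn h c hi]
    have hs : (∑ v ∈ Finset.range i, (cnt h (((-c).val + v) % (n + 1)) : ℤ))
        = Qf (cnt h) (n + 1) ((-c).val + i) - Qf (cnt h) (n + 1) ((-c).val) + i :=
      sum_shift (cnt h) (n + 1) ((-c).val) i
    have hcast : ((∑ v ∈ Finset.range i, cnt h ((v + (-c).val) % (n + 1)) : ℕ) : ℤ)
        = ∑ v ∈ Finset.range i, (cnt h (((-c).val + v) % (n + 1)) : ℤ) := by
      push_cast
      exact Finset.sum_congr rfl (fun v _ => by rw [Nat.add_comm v ((-c).val)])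
    constructor
    · intro hle
      have h2 : (m : ℤ) + i ≤ ((∑ v ∈ Finset.range i, cnt h ((v + (-c).val) % (n + 1)) : ℕ) : ℤ) + n := by
        exact_mod_cast hle
      rw [hcast, hs] at h2
      omega
    · intro hlt
      have h2 : (m : ℤ) + i ≤ ((∑ v ∈ Finset.range i, cnt h ((v + (-c).val) % (n + 1)) : ℕ) : ℤ) + n := by
        rw [hcast, hs]
        omega
      exact_mod_cast h2
  constructor
  · intro H
    apply isNewMin_of_window hsum (by omega) (by omega) (by omega)
    intro t ht1 ht2
    have hbt : (-c).val ≤ t := by omega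
    obtain ⟨i, rfl⟩ : ∃ i, t = (-c).val + i := ⟨t - (-c).val, by omega⟩
    have hi : i ≤ n := by omega
    exact (key i hi).mp (H i hi)
  · intro H i hi
    exact (key i hi).mpr (H ((-c).val + i) (by omega))

lemma shift_count (hm : 1 ≤ m) (hmn : m ≤ n) (h : Fin m → ZMod (n + 1)) :
    (Finset.univ.filter (fun c : ZMod (n + 1) =>
      ∀ i, i ≤ n → m + i ≤ (Finset.univ.filter (fun k => (h k + c).val < i)).card + n)).card
      = n + 1 - m := by
  have hsum : ∑ v ∈ Finset.range (n + 1), cnt h v = m := cnt_sum hmn h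
  rw [← cycle_count hsum (by omega) (by omega)]
  apply Finset.card_bij (fun c _ => (-c).val + (n + 1))
  · intro c hc
    rw [Finset.mem_filter] at hc ⊢
    refine ⟨Finset.mem_Ico.mpr ⟨by omega, by have := ZMod.val_lt (-c); omega⟩, ?_⟩
    exact (good_shift_iff hm hmn h c).mp hc.2
  · intro c1 h1 c2 h2 heq
    have : (-c1).val = (-c2).val := by omega
    have h3 := ZMod.val_injective _ this
    simpa using neg_injective h3
  · intro u hu
    rw [Finset.mem_filter, Finset.mem_Ico] at hu
    obtain ⟨⟨hu1, hu2⟩, hnm⟩ := hu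
    refine ⟨-(((u - (n + 1)) : ℕ) : ZMod (n + 1)), ?_, ?_⟩
    · rw [Finset.mem_filter]
      refine ⟨Finset.mem_univ _, ?_⟩
      apply (good_shift_iff hm hmn h _).mpr
      rw [neg_neg, ZMod.val_cast_of_lt (by omega)]
      rw [show u - (n + 1) + (n + 1) = u by omega]
      exact hnm
    · rw [neg_neg, ZMod.val_cast_of_lt (by omega)]
      omega

end Shift

section Main

/-- The parking condition for a `ZMod (n+1)`-valued function. -/
def goodP (m n : ℕ) (g : Fin m → ZMod (n + 1)) : Prop :=
  ∀ i, i ≤ n → m + i ≤ (Finset.univ.filter (fun k => (g k).val < i)).card + n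

instance (m n : ℕ) : DecidablePred (goodP m n) := fun _ => Nat.decidableBallLE _ _

/-- The leading-elements statistic for `ZMod`-valued functions. -/
def lelZ (m' n : ℕ) (g : Fin (m' + 1) → ZMod (n + 1)) : ℕ :=
  (Finset.univ.filter (fun i => g i = g 0)).card

lemma lelZ_shift (m' n : ℕ) (g : Fin (m' + 1) → ZMod (n + 1)) (c : ZMod (n + 1)) :
    lelZ m' n (fun k => g k + c) = lelZ m' n g := by
  unfold lelZ
  congr 1
  apply Finset.filter_congr
  intro k _
  simp

lemma step1 (m' n : ℕ) (hmn : m' + 1 ≤ n) (y : ℚ) :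
    ∑ π ∈ pf (m' + 1) n, y ^ (Finset.univ.filter (fun i => π i = π 0)).card
      = ∑ g ∈ Finset.univ.filter (goodP (m' + 1) n), y ^ lelZ m' n g := by
  have hn : 1 ≤ n := by omega
  apply Finset.sum_nbij' (i := fun π k => (((π k : ℕ)) : ZMod (n + 1)))
    (j := fun g k => (⟨(g k).val % n, Nat.mod_lt _ (by omega)⟩ : Fin n))
  · -- membership forward
    intro π hπ
    rw [pf, Finset.mem_filter] at hπ
    rw [Finset.mem_filter]
    refine ⟨Finset.mem_univ _, ?_⟩
    intro i hi
    have := hπ.2 i hi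
    have hfeq : (Finset.univ.filter (fun k => ((((π k : ℕ)) : ZMod (n + 1))).val < i))
        = Finset.univ.filter (fun k => (π k : ℕ) + 1 ≤ i) := by
      apply Finset.filter_congr
      intro k _
      rw [ZMod.val_cast_of_lt (by have := (π k).isLt; omega)]
      exact Nat.lt_iff_add_one_le
    rw [hfeq]
    exact this
  · -- membership backward
    intro g hg
    rw [Finset.mem_filter] at hg
    have hval : ∀ k, (g k).val < n := by
      have h1 := hg.2 n (le_refl n)
      have h2 : (Finset.univ.filter (fun k => (g k).val < n)).card = m' + 1 := by
        have hle := Finset.card_filter_le (Finset.univ : Finset (Fin (m' + 1)))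
          (fun k => (g k).val < n)
        simp only [Finset.card_univ, Fintype.card_fin] at hle
        omega
      have heq := Finset.eq_univ_of_card _ (by rw [h2, Fintype.card_fin])
      intro k
      have hk : k ∈ Finset.univ.filter (fun k => (g k).val < n) := by
        rw [heq]; exact Finset.mem_univ k
      exact (Finset.mem_filter.mp hk).2
    rw [pf, Finset.mem_filter]
    refine ⟨Finset.mem_univ _, ?_⟩
    intro i hi
    have := hg.2 i hi
    have hfeq : (Finset.univ.filter
          (fun k => ((⟨(g k).val % n, Nat.mod_lt _ (by omega)⟩ : Fin n) : ℕ) + 1 ≤ i))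
        = Finset.univ.filter (fun k => (g k).val < i) := by
      apply Finset.filter_congr
      intro k _
      simp only [Nat.mod_eq_of_lt (hval k)]
      exact Nat.add_one_le_iff
    rw [hfeq]
    exact this
  · -- left inverse
    intro π hπ
    funext k
    apply Fin.ext
    simp only [ZMod.val_cast_of_lt (show (π k : ℕ) < n + 1 by have := (π k).isLt; omega)]
    exact Nat.mod_eq_of_lt (π k).isLt
  · -- right inverse
    intro g hg
    rw [Finset.mem_filter] at hg
    have hval : ∀ k, (g k).val < n := by
      have h1 := hg.2 n (le_refl n)
      have h2 : (Finset.univ.filter (fun k => (g k).val < n)).card = m' + 1 := by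
        have hle := Finset.card_filter_le (Finset.univ : Finset (Fin (m' + 1)))
          (fun k => (g k).val < n)
        simp only [Finset.card_univ, Fintype.card_fin] at hle
        omega
      have heq := Finset.eq_univ_of_card _ (by rw [h2, Fintype.card_fin])
      intro k
      have hk : k ∈ Finset.univ.filter (fun k => (g k).val < n) := by
        rw [heq]; exact Finset.mem_univ k
      exact (Finset.mem_filter.mp hk).2
    funext k
    simp only [Nat.mod_eq_of_lt (hval k)]
    rw [ZMod.natCast_val, ZMod.cast_id]
  · -- values
    intro π hπ
    congr 1
    unfold lelZ
    congr 1
    apply Finset.filter_congr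
    intro k _
    simp only [eq_iff_iff]
    constructor
    · intro h; rw [h]
    · intro h
      apply Fin.ext
      have h1 : ((π k : ℕ) : ZMod (n + 1)).val = ((π 0 : ℕ) : ZMod (n + 1)).val := by rw [h]
      rwa [ZMod.val_cast_of_lt (by have := (π k).isLt; omega),
        ZMod.val_cast_of_lt (by have := (π 0).isLt; omega)] at h1

lemma total_sum (m' n : ℕ) (y : ℚ) :
    ∑ h : Fin (m' + 1) → ZMod (n + 1), y ^ lelZ m' n h
      = ((n : ℚ) + 1) * (y * (y + n) ^ m') := by
  rw [Fintype.sum_equiv ((Fin.consEquiv fun _ => ZMod (n + 1)).symm) _ (fun p => y ^ lelZ m' n (Fin.cons p.1 p.2))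
    (fun h => by exact congrArg (y ^ ·) (congrArg (lelZ m' n) (Fin.cons_self_tail h).symm))]
  rw [Fintype.sum_prod_type]
  have inner : ∀ x : ZMod (n + 1),
      ∑ g : Fin m' → ZMod (n + 1), y ^ lelZ m' n (Fin.cons x g)
        = y * (y + n) ^ m' := by
    intro x
    have hlel : ∀ g : Fin m' → ZMod (n + 1),
        lelZ m' n (Fin.cons x g) = 1 + (Finset.univ.filter (fun i => g i = x)).card := by
      intro g
      unfold lelZ
      rw [Finset.card_filter, Fin.sum_univ_succ, Finset.card_filter]
      simp [Fin.cons_zero, Fin.cons_succ]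
    have hpow : ∀ g : Fin m' → ZMod (n + 1),
        y ^ lelZ m' n (Fin.cons x g) = y * ∏ i, (if g i = x then y else 1) := by
      intro g
      rw [hlel, pow_add, pow_one, Finset.prod_ite, Finset.prod_const, Finset.prod_const,
        one_pow, mul_one]
    simp only [hpow]
    rw [← Finset.mul_sum]
    congr 1
    have hps := Finset.prod_univ_sum (fun _ : Fin m' => (Finset.univ : Finset (ZMod (n + 1))))
      (fun _ v => if v = x then y else (1 : ℚ))
    rw [Fintype.piFinset_univ] at hps
    rw [← hps]
    have hin : (∑ v : ZMod (n + 1), if v = x then y else (1:ℚ)) = y + n := by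
      have hv : ∀ v : ZMod (n + 1), (if v = x then y else (1:ℚ))
          = (if v = x then y - 1 else 0) + 1 := by
        intro v; by_cases h : v = x <;> simp [h]
      simp only [hv]
      rw [Finset.sum_add_distrib, Finset.sum_ite_eq' Finset.univ x (fun _ => y - 1),
        if_pos (Finset.mem_univ x), Finset.sum_const, Finset.card_univ, ZMod.card]
      push_cast
      ring
    simp only [hin]
    rw [Finset.prod_const, Finset.card_univ, Fintype.card_fin]
  simp only [inner]
  rw [Finset.sum_const, Finset.card_univ, ZMod.card]
  push_cast
  ring

end Main

lemma shift_count' (m' n : ℕ) (hmn : m' + 1 ≤ n) (h : Fin (m' + 1) → ZMod (n + 1)) :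
    (Finset.univ.filter (fun c : ZMod (n + 1) =>
      goodP (m' + 1) n (fun k => h k + c))).card = n - m' := by
  have hsc := shift_count (m := m' + 1) (n := n) (by omega) hmn h
  rw [show n + 1 - (m' + 1) = n - m' by omega] at hsc
  rw [← hsc]
  simp only [goodP]

lemma double_count (m' n : ℕ) (hmn : m' + 1 ≤ n) (y : ℚ) :
    ((n : ℚ) + 1) * ∑ g ∈ Finset.univ.filter (goodP (m' + 1) n), y ^ lelZ m' n g
      = ((n - m' : ℕ) : ℚ) * ∑ h : Fin (m' + 1) → ZMod (n + 1), y ^ lelZ m' n h := by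
  have hb : ∀ c : ZMod (n + 1), Function.Bijective
      (fun (h : Fin (m' + 1) → ZMod (n + 1)) => fun k => h k + c) := by
    intro c
    constructor
    · intro h1 h2 he
      funext k
      exact add_right_cancel (congrFun he k)
    · intro g
      exact ⟨fun k => g k - c, by funext k; simp⟩
  calc ((n : ℚ) + 1) * ∑ g ∈ Finset.univ.filter (goodP (m' + 1) n), y ^ lelZ m' n g
      = ∑ _c : ZMod (n + 1), ∑ g ∈ Finset.univ.filter (goodP (m' + 1) n), y ^ lelZ m' n g := by
        rw [Finset.sum_const, Finset.card_univ, ZMod.card, nsmul_eq_mul]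
        push_cast
        ring
    _ = ∑ c : ZMod (n + 1), ∑ h : Fin (m' + 1) → ZMod (n + 1),
          (if goodP (m' + 1) n (fun k => h k + c) then y ^ lelZ m' n h else 0) := by
        apply Finset.sum_congr rfl
        intro c _
        rw [Finset.sum_filter]
        exact (Fintype.sum_bijective _ (hb c)
          (fun h => if goodP (m' + 1) n (fun k => h k + c) then y ^ lelZ m' n h else 0)
          (fun g => if goodP (m' + 1) n g then y ^ lelZ m' n g else 0)
          (fun h => by simp only [lelZ_shift m' n h c])).symm
    _ = ∑ h : Fin (m' + 1) → ZMod (n + 1), ∑ c : ZMod (n + 1),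
          (if goodP (m' + 1) n (fun k => h k + c) then y ^ lelZ m' n h else 0) :=
        Finset.sum_comm
    _ = ∑ h : Fin (m' + 1) → ZMod (n + 1), ((n - m' : ℕ) : ℚ) * y ^ lelZ m' n h := by
        apply Finset.sum_congr rfl
        intro h _
        rw [← Finset.sum_filter, Finset.sum_const, shift_count' m' n hmn h, nsmul_eq_mul]
    _ = ((n - m' : ℕ) : ℚ) * ∑ h : Fin (m' + 1) → ZMod (n + 1), y ^ lelZ m' n h := by
        rw [Finset.mul_sum]

theorem gf_lel (m n : ℕ) (hm : 1 ≤ m) (hmn : m ≤ n) (y : ℚ) :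
    ∑ π ∈ pf m n, y ^ (Finset.univ.filter (fun i => π i = π ⟨0, by omega⟩)).card =
      ((n : ℚ) - m + 1) * y * (y + n) ^ (m - 1) := by
  obtain ⟨m', rfl⟩ : ∃ m', m = m' + 1 := ⟨m - 1, by omega⟩
  have hpivot : (⟨0, by omega⟩ : Fin (m' + 1)) = 0 := rfl
  rw [show (∑ π ∈ pf (m' + 1) n, y ^ (Finset.univ.filter
        (fun i => π i = π ⟨0, by omega⟩)).card)
      = ∑ π ∈ pf (m' + 1) n, y ^ (Finset.univ.filter (fun i => π i = π 0)).card by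
    rw [hpivot]]
  rw [step1 m' n hmn y]
  have hd := double_count m' n hmn y
  rw [total_sum m' n y] at hd
  have hn1 : ((n : ℚ) + 1) ≠ 0 := by positivity
  have hS : ∑ g ∈ Finset.univ.filter (goodP (m' + 1) n), y ^ lelZ m' n g
      = ((n - m' : ℕ) : ℚ) * (y * (y + n) ^ m') := by
    apply mul_left_cancel₀ hn1
    rw [hd]
    ring
  rw [hS]
  have hc : ((n - m' : ℕ) : ℚ) = (n : ℚ) - m' := by
    have : m' ≤ n := by omega
    push_cast [this]
    ring
  rw [hc, show m' + 1 - 1 = m' from rfl]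
  push_cast
  ring
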